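/- Falling factorial identity: let a, b, μ_1, …, μ_t be positive integers with μ_1 + ⋯ + μ_t < min(a,b). Then (a+b)·(a+b−μ_{[t]}+t−1)_{t−1} = a·(a−μ_{[t]}+t−1)_{t−1} + b·(b−μ_{[t]}+t−1)_{t−1} + ∑_{[t]=A⊔B, A,B≠∅} ab·(a−μ_A+|A|−1)_{|A|−1}·(b−μ_B+|B|−1)_{|B|−1}, where (x)_m = x(x−1)⋯(x−m+1), μ_S = ∑_{i∈S} μ_i, and the sum runs over ordered partitions of [t] into two nonempty sets. (The identity holds as a polynomial identity in a, b, μ_1,…,μ_t.) -/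

import Mathlib

open Finset


private def Fzz (x w : ℤ) : ℕ → ℤ
  | 0 => 1
  | k + 1 => x * ∏ j ∈ Finset.range k, (x - w + j + 1)

private lemma Fzz_zero (x w : ℤ) : Fzz x w 0 = 1 := rfl

private lemma Fzz_succ (x w : ℤ) (k : ℕ) :
    Fzz x w (k + 1) = x * ∏ j ∈ Finset.range k, (x - w + j + 1) := rfl

private lemma Fzz_sub (x w : ℤ) (k : ℕ) :
    Fzz x w (k + 1) - Fzz x (w + 1) (k + 1) = k * Fzz x w k := by
  cases k with
  | zero => simp [Fzz]
  | succ m =>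
      have h1 : ∏ j ∈ Finset.range (m + 1), (x - w + j + 1)
          = (∏ j ∈ Finset.range m, (x - w + j + 1)) * (x - w + m + 1) :=
        Finset.prod_range_succ _ _
      have h2 : ∏ j ∈ Finset.range (m + 1), (x - (w + 1) + j + 1)
          = (∏ j ∈ Finset.range m, (x - w + j + 1)) * (x - w) := by
        have e1 : ∀ j ∈ Finset.range (m + 1), x - (w + 1) + (j : ℤ) + 1
            = x - w + (j : ℤ) := fun j _ => by ring
        rw [Finset.prod_congr rfl e1, Finset.prod_range_succ']
        have e2 : ∀ j ∈ Finset.range m, (x - w + ((j : ℤ) + 1)) = x - w + (j : ℤ) + 1 :=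
          fun j _ => by push_cast; ring
        rw [show (∏ j ∈ Finset.range m, (x - w + ((j : ℕ) + 1 : ℕ))) =
            ∏ j ∈ Finset.range m, (x - w + (j : ℤ) + 1) from
          Finset.prod_congr rfl fun j _ => by push_cast; ring]
        norm_num
      rw [Fzz_succ, Fzz_succ, Fzz_succ, h1, h2]
      push_cast
      ring

private lemma Fzz_zero_succ (x : ℤ) (k : ℕ) : Fzz x 0 (k + 1) = Fzz x 0 k * (x + k) := by
  cases k with
  | zero => simp [Fzz]
  | succ m =>
      rw [Fzz_succ, Fzz_succ, Finset.prod_range_succ]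
      push_cast
      ring

variable {ι : Type*} [DecidableEq ι]

private def RSzz (a b : ℤ) (S : Finset ι) (μ : ι → ℤ) : ℤ :=
  ∑ A ∈ S.powerset, Fzz a (∑ i ∈ A, μ i) A.card * Fzz b (∑ i ∈ S \ A, μ i) (S \ A).card

private def Gzz (a b : ℤ) (S : Finset ι) (μ : ι → ℤ) : ℤ :=
  Fzz (a + b) (∑ i ∈ S, μ i) S.card - RSzz a b S μ

private lemma RSzz_insert (a b : ℤ) (S : Finset ι) (n : ι) (hn : n ∈ S) (ρ : ι → ℤ) :
    RSzz a b S ρ = ∑ A ∈ (S.erase n).powerset,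
      (Fzz a (∑ i ∈ A, ρ i) A.card
          * Fzz b (ρ n + ∑ i ∈ S.erase n \ A, ρ i) ((S.erase n \ A).card + 1)
        + Fzz a (ρ n + ∑ i ∈ A, ρ i) (A.card + 1)
          * Fzz b (∑ i ∈ S.erase n \ A, ρ i) (S.erase n \ A).card) := by
  set S' := S.erase n with hS'
  have hnS' : n ∉ S' := Finset.notMem_erase n S
  have hins : insert n S' = S := Finset.insert_erase hn
  rw [RSzz, ← hins, Finset.sum_powerset_insert hnS', ← Finset.sum_add_distrib]
  refine Finset.sum_congr rfl fun A hA => ?_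
  rw [Finset.mem_powerset] at hA
  have hnA : n ∉ A := fun h => hnS' (hA h)
  have h1 : insert n S' \ A = insert n (S' \ A) := Finset.insert_sdiff_of_notMem _ hnA
  have h2 : insert n S' \ insert n A = S' \ A := by
    ext j
    by_cases hj : j = n
    · subst hj; simp [hnS']
    · simp [hj, Finset.mem_sdiff, Finset.mem_insert]
  have hnSA : n ∉ S' \ A := fun h => hnS' (Finset.mem_sdiff.mp h).1
  rw [h1, h2, Finset.sum_insert hnSA, Finset.card_insert_of_notMem hnSA,
    Finset.sum_insert hnA, Finset.card_insert_of_notMem hnA]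

private lemma Gzz_step (a b : ℤ) (S : Finset ι) (n : ι) (hn : n ∈ S)
    (IH : ∀ ρ : ι → ℤ, Fzz (a + b) (∑ i ∈ S.erase n, ρ i) (S.erase n).card
        = RSzz a b (S.erase n) ρ) (μ : ι → ℤ) :
    Gzz a b S μ = Gzz a b S (Function.update μ n (μ n + 1)) := by
  set S' := S.erase n with hS'
  have hnS' : n ∉ S' := Finset.notMem_erase n S
  have hins : insert n S' = S := Finset.insert_erase hn
  set s := S'.card with hs
  have hcard : S.card = s + 1 := by rw [← hins, Finset.card_insert_of_notMem hnS']
  set μ' := Function.update μ n (μ n + 1) with hμ'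
  have hupA : ∀ A : Finset ι, A ⊆ S' → ∑ i ∈ A, μ' i = ∑ i ∈ A, μ i := fun A hA =>
    Finset.sum_update_of_notMem (fun h => hnS' (hA h)) _ _
  have hμ'n : μ' n = μ n + 1 := Function.update_self _ _ _
  have hsum' : ∑ i ∈ S, μ' i = (∑ i ∈ S, μ i) + 1 := by
    rw [← hins, Finset.sum_insert hnS', Finset.sum_insert hnS',
      hupA S' (Finset.Subset.refl _), hμ'n]
    ring
  have hdiff : RSzz a b S μ - RSzz a b S μ' = ∑ A ∈ S'.powerset,
      (Fzz a (∑ j ∈ A, μ j) A.card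
          * ((S' \ A).card * Fzz b (μ n + ∑ j ∈ S' \ A, μ j) (S' \ A).card)
        + (A.card * Fzz a (μ n + ∑ j ∈ A, μ j) A.card)
          * Fzz b (∑ j ∈ S' \ A, μ j) (S' \ A).card) := by
    rw [RSzz_insert a b S n hn μ, RSzz_insert a b S n hn μ', ← Finset.sum_sub_distrib]
    refine Finset.sum_congr rfl fun A hA => ?_
    rw [Finset.mem_powerset] at hA
    rw [hupA A hA, hupA (S' \ A) sdiff_subset, hμ'n]
    have e1 := Fzz_sub b (μ n + ∑ j ∈ S' \ A, μ j) (S' \ A).card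
    have e2 := Fzz_sub a (μ n + ∑ j ∈ A, μ j) A.card
    have r1 : μ n + 1 + ∑ j ∈ S' \ A, μ j = (μ n + ∑ j ∈ S' \ A, μ j) + 1 := by ring
    have r2 : μ n + 1 + ∑ j ∈ A, μ j = (μ n + ∑ j ∈ A, μ j) + 1 := by ring
    rw [r1, r2]
    linear_combination (Fzz a (∑ j ∈ A, μ j) A.card) * e1
      + (Fzz b (∑ j ∈ S' \ A, μ j) (S' \ A).card) * e2
  have hite : ∀ A ∈ S'.powerset,
      (Fzz a (∑ j ∈ A, μ j) A.card
          * ((S' \ A).card * Fzz b (μ n + ∑ j ∈ S' \ A, μ j) (S' \ A).card)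
        + (A.card * Fzz a (μ n + ∑ j ∈ A, μ j) A.card)
          * Fzz b (∑ j ∈ S' \ A, μ j) (S' \ A).card)
      = ∑ i ∈ S', (if i ∈ A
          then Fzz a (μ n + ∑ j ∈ A, μ j) A.card * Fzz b (∑ j ∈ S' \ A, μ j) (S' \ A).card
          else Fzz a (∑ j ∈ A, μ j) A.card
            * Fzz b (μ n + ∑ j ∈ S' \ A, μ j) (S' \ A).card) := by
    intro A hA
    rw [Finset.mem_powerset] at hA
    have hf1 : S'.filter (fun i => i ∈ A) = A := by
      rw [Finset.filter_mem_eq_inter, Finset.inter_eq_right.mpr hA]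
    have hf2 : S'.filter (fun i => i ∉ A) = S' \ A := (Finset.sdiff_eq_filter S' A).symm
    rw [Finset.sum_ite, Finset.sum_const, Finset.sum_const, hf1, hf2,
      nsmul_eq_mul, nsmul_eq_mul]
    ring
  have hper : ∀ i ∈ S', (∑ A ∈ S'.powerset, (if i ∈ A
          then Fzz a (μ n + ∑ j ∈ A, μ j) A.card * Fzz b (∑ j ∈ S' \ A, μ j) (S' \ A).card
          else Fzz a (∑ j ∈ A, μ j) A.card
            * Fzz b (μ n + ∑ j ∈ S' \ A, μ j) (S' \ A).card))
      = Fzz (a + b) (∑ j ∈ S, μ j) s := by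
    intro i hi
    set ν := Function.update μ i (μ i + μ n) with hν
    have hνsum : ∀ B : Finset ι, i ∈ B → ∑ j ∈ B, ν j = μ n + ∑ j ∈ B, μ j := by
      intro B hiB
      rw [Finset.sum_update_of_mem hiB, ← Finset.add_sum_erase B μ hiB, Finset.erase_eq]
      ring
    have hνsum' : ∀ B : Finset ι, i ∉ B → ∑ j ∈ B, ν j = ∑ j ∈ B, μ j := fun B hiB =>
      Finset.sum_update_of_notMem hiB _ _
    have hIH := IH ν
    rw [hνsum S' hi] at hIH
    have hS : ∑ j ∈ S, μ j = μ n + ∑ j ∈ S', μ j := by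
      rw [← hins, Finset.sum_insert hnS']
    rw [hS, hIH, RSzz]
    refine Finset.sum_congr rfl fun A hA => ?_
    rw [Finset.mem_powerset] at hA
    by_cases hiA : i ∈ A
    · rw [if_pos hiA, hνsum A hiA, hνsum' (S' \ A) (fun h => (Finset.mem_sdiff.mp h).2 hiA)]
    · rw [if_neg hiA, hνsum' A hiA, hνsum (S' \ A) (Finset.mem_sdiff.mpr ⟨hi, hiA⟩)]
  have hmain : RSzz a b S μ - RSzz a b S μ' = s * Fzz (a + b) (∑ i ∈ S, μ i) s := by
    rw [hdiff, Finset.sum_congr rfl hite, Finset.sum_comm, Finset.sum_congr rfl hper,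
      Finset.sum_const, nsmul_eq_mul]
  rw [Gzz, Gzz, hsum', hcard]
  have e := Fzz_sub (a + b) (∑ i ∈ S, μ i) s
  linear_combination e - hmain

private lemma Gzz_base (a b : ℤ) (S : Finset ι) (n : ι) (hn : n ∈ S)
    (IH : ∀ ρ : ι → ℤ, Fzz (a + b) (∑ i ∈ S.erase n, ρ i) (S.erase n).card
        = RSzz a b (S.erase n) ρ) (ρ : ι → ℤ) (hρ : ∀ i ∈ S, ρ i = 0) :
    Gzz a b S ρ = 0 := by
  set S' := S.erase n with hS'
  have hnS' : n ∉ S' := Finset.notMem_erase n S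
  have hins : insert n S' = S := Finset.insert_erase hn
  set s := S'.card with hs
  have hcard : S.card = s + 1 := by rw [← hins, Finset.card_insert_of_notMem hnS']
  have hzsum : ∀ A : Finset ι, A ⊆ S → ∑ i ∈ A, ρ i = 0 := fun A hA =>
    Finset.sum_eq_zero fun i hi => hρ i (hA hi)
  have hρn : ρ n = 0 := hρ n hn
  have hsub : S' ⊆ S := Finset.erase_subset n S
  have hIH := IH ρ
  rw [hzsum S' hsub] at hIH
  rw [Gzz, hzsum S (Finset.Subset.refl S), hcard, sub_eq_zero,
    RSzz_insert a b S n hn ρ]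
  have hstep : ∀ A ∈ S'.powerset,
      (Fzz a (∑ i ∈ A, ρ i) A.card
          * Fzz b (ρ n + ∑ i ∈ S' \ A, ρ i) ((S' \ A).card + 1)
        + Fzz a (ρ n + ∑ i ∈ A, ρ i) (A.card + 1)
          * Fzz b (∑ i ∈ S' \ A, ρ i) (S' \ A).card)
      = (Fzz a (∑ i ∈ A, ρ i) A.card * Fzz b (∑ i ∈ S' \ A, ρ i) (S' \ A).card)
          * (a + b + s) := by
    intro A hA
    rw [Finset.mem_powerset] at hA
    have hA0 : ∑ i ∈ A, ρ i = 0 := hzsum A (hA.trans hsub)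
    have hB0 : ∑ i ∈ S' \ A, ρ i = 0 := hzsum _ ((sdiff_subset).trans hsub)
    have hcards : (S' \ A).card + A.card = s := Finset.card_sdiff_add_card_eq_card hA
    rw [hA0, hB0, hρn]
    have e1 := Fzz_zero_succ b (S' \ A).card
    have e2 := Fzz_zero_succ a A.card
    rw [show ((0 : ℤ) + 0) = 0 by ring] at *
    rw [e1, e2, ← hcards]
    push_cast
    ring
  have hR : RSzz a b S' ρ = ∑ A ∈ S'.powerset,
      Fzz a (∑ i ∈ A, ρ i) A.card * Fzz b (∑ i ∈ S' \ A, ρ i) (S' \ A).card := rfl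
  rw [Finset.sum_congr rfl hstep, ← Finset.sum_mul, ← hR, ← hIH, Fzz_zero_succ]

private lemma Gzz_const (a b : ℤ) (S : Finset ι) (n : ι) (hn : n ∈ S)
    (IH : ∀ ρ : ι → ℤ, Fzz (a + b) (∑ i ∈ S.erase n, ρ i) (S.erase n).card
        = RSzz a b (S.erase n) ρ) (ρ : ι → ℤ) (w : ℤ) :
    Gzz a b S (Function.update ρ n w) = Gzz a b S ρ := by
  have E : ∀ v : ℤ, Gzz a b S (Function.update ρ n v)
      = Gzz a b S (Function.update ρ n (v + 1)) := by
    intro v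
    have h := Gzz_step a b S n hn IH (Function.update ρ n v)
    rwa [Function.update_self, Function.update_idem] at h
  have key0 : ∀ v : ℤ, Gzz a b S (Function.update ρ n v)
      = Gzz a b S (Function.update ρ n 0) := by
    intro v
    induction v using Int.induction_on with
    | zero => rfl
    | succ k ih => rw [← E (k : ℤ)]; exact ih
    | pred k ih =>
        have h := E (-(k : ℤ) - 1)
        rw [show (-(k : ℤ) - 1 + 1) = -(k : ℤ) by ring] at h
        rw [h]; exact ih
  rw [key0 w, ← key0 (ρ n), Function.update_eq_self]

private lemma Gzz_zero (a b : ℤ) (S : Finset ι)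
    (IH : ∀ T : Finset ι, T ⊂ S → ∀ ρ : ι → ℤ,
      Fzz (a + b) (∑ i ∈ T, ρ i) T.card = RSzz a b T ρ) (μ : ι → ℤ) :
    Gzz a b S μ = 0 := by
  rcases S.eq_empty_or_nonempty with rfl | ⟨n, hn⟩
  · simp [Gzz, RSzz, Fzz]
  · have hIH : ∀ m : ι, m ∈ S → ∀ ρ : ι → ℤ,
        Fzz (a + b) (∑ i ∈ S.erase m, ρ i) (S.erase m).card = RSzz a b (S.erase m) ρ :=
      fun m hm => IH (S.erase m) (Finset.erase_ssubset hm)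
    have hzero : ∀ T : Finset ι, T ⊆ S →
        Gzz a b S μ = Gzz a b S (fun j => if j ∈ T then 0 else μ j) := by
      intro T
      induction T using Finset.induction_on with
      | empty => intro _; simp
      | insert c T' hni ih =>
          intro hsub
          have hc : c ∈ S := hsub (Finset.mem_insert_self _ _)
          have hT' : T' ⊆ S := fun j hj => hsub (Finset.mem_insert_of_mem hj)
          have hfun : (fun j => if j ∈ insert c T' then (0 : ℤ) else μ j)
              = Function.update (fun j => if j ∈ T' then (0 : ℤ) else μ j) c 0 := by
            funext j
            by_cases hj : j = c
            · subst hj; simp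
            · simp [Function.update_of_ne hj, Finset.mem_insert, hj]
          rw [hfun, Gzz_const a b S c hc (hIH c hc), ← ih hT']
    rw [hzero S (Finset.Subset.refl S)]
    exact Gzz_base a b S n hn (hIH n hn) _ (fun i hi => by simp [hi])

private lemma key_zz (a b : ℤ) (S : Finset ι) : ∀ μ : ι → ℤ,
    Fzz (a + b) (∑ i ∈ S, μ i) S.card = RSzz a b S μ := by
  induction S using Finset.strongInduction with
  | _ S IH =>
      intro μ
      have h := Gzz_zero a b S (fun T hT => IH T hT) μ
      rw [Gzz, sub_eq_zero] at h
      exact h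

private lemma prod_desc (c : ℕ) : ∀ k : ℕ,
    (∏ j ∈ Finset.range k, ((c : ℤ) + j + 1)) = ((c + k).descFactorial k : ℤ)
  | 0 => by simp
  | k + 1 => by
      rw [Finset.prod_range_succ, prod_desc c k,
        show c + (k + 1) = (c + k) + 1 from rfl, Nat.succ_descFactorial_succ]
      push_cast
      ring

private lemma Fzz_eq_desc (x c : ℕ) (h : c ≤ x) (K : ℕ) :
    Fzz (x : ℤ) (c : ℤ) (K + 1) = ((x * Nat.descFactorial (x - c + K) K : ℕ) : ℤ) := by
  rw [Fzz_succ]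
  have e : ∀ j ∈ Finset.range K, ((x : ℤ) - c + j + 1) = (((x - c : ℕ) : ℤ) + j + 1) :=
    fun j _ => by rw [Nat.cast_sub h]
  rw [Finset.prod_congr rfl e, prod_desc]
  push_cast
  ring

/-- Falling factorial identity: for positive integers `a, b, μ_1, …, μ_t` with
`μ_1 + ⋯ + μ_t < min(a,b)`,
`(a+b)·(a+b−μ_{[t]}+t−1)_{t−1} = a·(a−μ_{[t]}+t−1)_{t−1} + b·(b−μ_{[t]}+t−1)_{t−1}
  + ∑_{[t]=A⊔B, A,B≠∅} ab·(a−μ_A+|A|−1)_{|A|−1}·(b−μ_B+|B|−1)_{|B|−1}`,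
where `(x)_m = x(x−1)⋯(x−m+1)` is the falling factorial, `μ_S = ∑_{i∈S} μ_i`, and the sum
runs over ordered partitions of `[t]` into two nonempty sets. -/
theorem falling_factorial_identity (t a b : ℕ) (μ : Fin t → ℕ)
    (ha : 0 < a) (hb : 0 < b) (hμ : ∀ i, 0 < μ i) (hsum : ∑ i, μ i < min a b) :
    (a + b) * Nat.descFactorial (a + b - (∑ i, μ i) + t - 1) (t - 1) =
      a * Nat.descFactorial (a - (∑ i, μ i) + t - 1) (t - 1) +
        b * Nat.descFactorial (b - (∑ i, μ i) + t - 1) (t - 1) +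
        ∑ A ∈ Finset.univ.filter (fun A : Finset (Fin t) => A.Nonempty ∧ Aᶜ.Nonempty),
          a * b * Nat.descFactorial (a - (∑ i ∈ A, μ i) + A.card - 1) (A.card - 1) *
            Nat.descFactorial (b - (∑ i ∈ Aᶜ, μ i) + Aᶜ.card - 1) (Aᶜ.card - 1) := by
  rcases Nat.eq_zero_or_pos t with rfl | htpos
  · have h0 : (Finset.univ.filter (fun A : Finset (Fin 0) => A.Nonempty ∧ Aᶜ.Nonempty)) = ∅ := by
      ext A
      simp [Finset.eq_empty_of_isEmpty A]
    rw [h0]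
    simp
  obtain ⟨k, rfl⟩ : ∃ k, t = k + 1 := ⟨t - 1, by omega⟩
  have hma : (∑ i, μ i) < a := (lt_min_iff.mp hsum).1
  have hmb : (∑ i, μ i) < b := (lt_min_iff.mp hsum).2
  have hsA : ∀ A : Finset (Fin (k + 1)), (∑ i ∈ A, μ i) ≤ ∑ i, μ i := fun A =>
    Finset.sum_le_sum_of_subset (Finset.subset_univ A)
  have hcastM : (∑ i ∈ Finset.univ, ((μ i : ℤ))) = ((∑ i, μ i : ℕ) : ℤ) := by
    push_cast; rfl
  -- massage the key identity
  have hkey := key_zz (a : ℤ) (b : ℤ) (Finset.univ : Finset (Fin (k + 1))) (fun i => (μ i : ℤ))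
  rw [RSzz] at hkey
  simp only [Finset.powerset_univ, ← Finset.compl_eq_univ_sdiff, Finset.card_univ,
    Fintype.card_fin, hcastM] at hkey
  rw [← Finset.sum_filter_add_sum_filter_not Finset.univ
      (fun A : Finset (Fin (k + 1)) => A.Nonempty ∧ Aᶜ.Nonempty)] at hkey
  have hpair : Finset.univ.filter
      (fun A : Finset (Fin (k + 1)) => ¬(A.Nonempty ∧ Aᶜ.Nonempty)) = {∅, Finset.univ} := by
    ext A
    simp only [Finset.mem_filter, Finset.mem_univ, true_and, not_and_or,
      Finset.not_nonempty_iff_eq_empty, Finset.compl_eq_empty_iff, Finset.mem_insert,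
      Finset.mem_singleton]
  rw [hpair, Finset.sum_pair (Ne.symm (Finset.Nonempty.ne_empty Finset.univ_nonempty))] at hkey
  simp only [Finset.sum_empty, Finset.card_empty, Finset.compl_empty, Finset.compl_univ,
    Fzz_zero, one_mul, mul_one, Finset.card_univ, Fintype.card_fin, hcastM] at hkey
  -- index arithmetic in the goal
  have i1 : a + b - (∑ i, μ i) + (k + 1) - 1 = (a + b - (∑ i, μ i)) + k := by omega
  have i2 : a - (∑ i, μ i) + (k + 1) - 1 = (a - (∑ i, μ i)) + k := by omega
  have i3 : b - (∑ i, μ i) + (k + 1) - 1 = (b - (∑ i, μ i)) + k := by omega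
  have i4 : k + 1 - 1 = k := rfl
  rw [i1, i2, i3, i4, ← Nat.cast_inj (R := ℤ)]
  push_cast
  have hterm : ∀ A ∈ Finset.univ.filter
      (fun A : Finset (Fin (k + 1)) => A.Nonempty ∧ Aᶜ.Nonempty),
      Fzz (a : ℤ) (∑ i ∈ A, ((μ i : ℤ))) A.card * Fzz (b : ℤ) (∑ i ∈ Aᶜ, ((μ i : ℤ))) Aᶜ.card
      = (a : ℤ) * (b : ℤ)
          * ((Nat.descFactorial (a - (∑ i ∈ A, μ i) + A.card - 1) (A.card - 1) : ℕ) : ℤ)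
          * ((Nat.descFactorial (b - (∑ i ∈ Aᶜ, μ i) + Aᶜ.card - 1) (Aᶜ.card - 1) : ℕ) : ℤ) := by
    intro A hA
    obtain ⟨hA1, hA2⟩ := (Finset.mem_filter.mp hA).2
    have hcA : A.card = (A.card - 1) + 1 := by
      have := Finset.card_pos.mpr hA1; omega
    have hcB : Aᶜ.card = (Aᶜ.card - 1) + 1 := by
      have := Finset.card_pos.mpr hA2; omega
    have hμa : (∑ i ∈ A, μ i) ≤ a := le_of_lt (lt_of_le_of_lt (hsA A) hma)
    have hμb : (∑ i ∈ Aᶜ, μ i) ≤ b := le_of_lt (lt_of_le_of_lt (hsA Aᶜ) hmb)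
    have hca : (∑ i ∈ A, ((μ i : ℤ))) = ((∑ i ∈ A, μ i : ℕ) : ℤ) := by push_cast; rfl
    have hcb : (∑ i ∈ Aᶜ, ((μ i : ℤ))) = ((∑ i ∈ Aᶜ, μ i : ℕ) : ℤ) := by push_cast; rfl
    have j1 : a - (∑ i ∈ A, μ i) + A.card - 1 = (a - (∑ i ∈ A, μ i)) + (A.card - 1) := by omega
    have j2 : b - (∑ i ∈ Aᶜ, μ i) + Aᶜ.card - 1 = (b - (∑ i ∈ Aᶜ, μ i)) + (Aᶜ.card - 1) := by
      omega
    rw [hca, hcb, j1, j2, hcA, hcB, Fzz_eq_desc a _ hμa, Fzz_eq_desc b _ hμb]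
    rw [show (A.card - 1 + 1) - 1 = A.card - 1 from rfl,
      show (Aᶜ.card - 1 + 1) - 1 = Aᶜ.card - 1 from rfl]
    push_cast
    ring
  calc ((a : ℤ) + b) * ((Nat.descFactorial (a + b - (∑ i, μ i) + k) k : ℕ) : ℤ)
      = Fzz ((a : ℤ) + b) ((∑ i, μ i : ℕ) : ℤ) (k + 1) := by
        rw [show ((a : ℤ) + b) = ((a + b : ℕ) : ℤ) by push_cast; ring,
          Fzz_eq_desc (a + b) (∑ i, μ i) (by omega) k]
        push_cast
        ring
    _ = _ := by
        rw [hkey, Finset.sum_congr rfl hterm,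
          Fzz_eq_desc a (∑ i, μ i) (le_of_lt hma) k, Fzz_eq_desc b (∑ i, μ i) (le_of_lt hmb) k]
        push_cast
        ring
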